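/- For every non-negative integer n, the identity A_n = (3/(2n+3)) Σ_{j=0}^{n} B_j holds, where A_n = Σ_{k+l+m=n} 1/((2k+1)(2l+1)(2m+1)) (sum over ordered triples of non-negative integers) and B_j = Σ_{k+l=j} 1/((2k+1)(2l+1)) (sum over ordered pairs of non-negative integers). -/

import Mathlib

open Finset

/-- Triangle sum reindexing: summing over `{(k,i) : k+i ≤ n}` row by row equals
summing over antidiagonals `j = 0, …, n`. -/
lemma triangle_sum (n : ℕ) (f : ℕ → ℕ → ℝ) :
    ∑ k ∈ Finset.range (n + 1), ∑ i ∈ Finset.range (n + 1 - k), f k i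
    = ∑ j ∈ Finset.range (n + 1), ∑ p ∈ Finset.HasAntidiagonal.antidiagonal j, f p.1 p.2 := by
  induction n with
  | zero => simp
  | succ n ih =>
      have h1 : ∀ k ∈ Finset.range (n + 2),
          ∑ i ∈ Finset.range (n + 2 - k), f k i
          = (∑ i ∈ Finset.range (n + 1 - k), f k i) + f k (n + 1 - k) := by
        intro k hk
        have hk' : k ≤ n + 1 := by simpa [Nat.lt_succ_iff] using hk
        have : n + 2 - k = (n + 1 - k) + 1 := by omega
        rw [this, Finset.sum_range_succ]
      rw [Finset.sum_congr rfl h1, Finset.sum_add_distrib]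
      have h2 : ∑ k ∈ Finset.range (n + 2), ∑ i ∈ Finset.range (n + 1 - k), f k i
          = ∑ k ∈ Finset.range (n + 1), ∑ i ∈ Finset.range (n + 1 - k), f k i := by
        rw [Finset.sum_range_succ]
        simp
      have h3 : ∑ k ∈ Finset.range (n + 2), f k (n + 1 - k)
          = ∑ p ∈ Finset.HasAntidiagonal.antidiagonal (n + 1), f p.1 p.2 := by
        rw [Finset.Nat.sum_antidiagonal_eq_sum_range_succ_mk]
      rw [h2, ih, h3]
      conv_rhs => rw [Finset.sum_range_succ]

theorem triple_sum_eq_pair_sums (n : ℕ) :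
    ∑ p ∈ Finset.HasAntidiagonal.antidiagonal n, ∑ q ∈ Finset.HasAntidiagonal.antidiagonal p.2,
      (1 : ℝ) / ((2 * p.1 + 1) * (2 * q.1 + 1) * (2 * q.2 + 1))
    = (3 / (2 * n + 3)) * ∑ j ∈ Finset.range (n + 1),
        ∑ p ∈ Finset.HasAntidiagonal.antidiagonal j, (1 : ℝ) / ((2 * p.1 + 1) * (2 * p.2 + 1)) := by
  set g : ℕ → ℕ → ℝ := fun a b => 1 / ((2 * a + 1) * (2 * b + 1)) with hg
  set S : ℝ := ∑ j ∈ Finset.range (n + 1),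
      ∑ p ∈ Finset.HasAntidiagonal.antidiagonal j, (1 : ℝ) / ((2 * p.1 + 1) * (2 * p.2 + 1)) with hS
  have key : (2 * (n : ℝ) + 3) *
      (∑ p ∈ Finset.HasAntidiagonal.antidiagonal n, ∑ q ∈ Finset.HasAntidiagonal.antidiagonal p.2,
        (1 : ℝ) / ((2 * p.1 + 1) * (2 * q.1 + 1) * (2 * q.2 + 1))) = 3 * S := by
    rw [Finset.mul_sum]
    have step : ∀ p ∈ Finset.HasAntidiagonal.antidiagonal n,
        (2 * (n : ℝ) + 3) * ∑ q ∈ Finset.HasAntidiagonal.antidiagonal p.2,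
          (1 : ℝ) / ((2 * p.1 + 1) * (2 * q.1 + 1) * (2 * q.2 + 1))
        = ∑ q ∈ Finset.HasAntidiagonal.antidiagonal p.2,
            (g p.1 q.1 + g q.1 q.2 + g q.2 p.1) := by
      intro p hp
      rw [Finset.mul_sum]
      refine Finset.sum_congr rfl fun q hq => ?_
      have h1 : p.1 + p.2 = n := Finset.HasAntidiagonal.mem_antidiagonal.mp hp
      have h2 : q.1 + q.2 = p.2 := Finset.HasAntidiagonal.mem_antidiagonal.mp hq
      have hn : (n : ℝ) = p.1 + q.1 + q.2 := by
        have : p.1 + q.1 + q.2 = n := by omega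
        push_cast [← this]; ring
      have ha : (2 * (p.1 : ℝ) + 1) ≠ 0 := by positivity
      have hb : (2 * (q.1 : ℝ) + 1) ≠ 0 := by positivity
      have hc : (2 * (q.2 : ℝ) + 1) ≠ 0 := by positivity
      rw [hn, hg]
      field_simp
      ring
    rw [Finset.sum_congr rfl step]
    have split : ∑ p ∈ Finset.HasAntidiagonal.antidiagonal n, ∑ q ∈ Finset.HasAntidiagonal.antidiagonal p.2,
        (g p.1 q.1 + g q.1 q.2 + g q.2 p.1)
        = (∑ p ∈ Finset.HasAntidiagonal.antidiagonal n, ∑ q ∈ Finset.HasAntidiagonal.antidiagonal p.2, g p.1 q.1)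
        + (∑ p ∈ Finset.HasAntidiagonal.antidiagonal n, ∑ q ∈ Finset.HasAntidiagonal.antidiagonal p.2, g q.1 q.2)
        + (∑ p ∈ Finset.HasAntidiagonal.antidiagonal n, ∑ q ∈ Finset.HasAntidiagonal.antidiagonal p.2, g q.2 p.1) := by
      simp [Finset.sum_add_distrib]
    rw [split]
    have hS1 : (∑ p ∈ Finset.HasAntidiagonal.antidiagonal n, ∑ q ∈ Finset.HasAntidiagonal.antidiagonal p.2, g p.1 q.1) = S := by
      have inner : ∀ p : ℕ × ℕ, ∑ q ∈ Finset.HasAntidiagonal.antidiagonal p.2, g p.1 q.1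
          = ∑ i ∈ Finset.range (p.2 + 1), g p.1 i := by
        intro p
        rw [Finset.Nat.sum_antidiagonal_eq_sum_range_succ_mk]
      calc (∑ p ∈ Finset.HasAntidiagonal.antidiagonal n, ∑ q ∈ Finset.HasAntidiagonal.antidiagonal p.2, g p.1 q.1)
          = ∑ p ∈ Finset.HasAntidiagonal.antidiagonal n, ∑ i ∈ Finset.range (p.2 + 1), g p.1 i := by
            exact Finset.sum_congr rfl fun p _ => inner p
        _ = ∑ k ∈ Finset.range (n + 1), ∑ i ∈ Finset.range (n - k + 1), g k i := by
            rw [Finset.Nat.sum_antidiagonal_eq_sum_range_succ_mk]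
        _ = ∑ k ∈ Finset.range (n + 1), ∑ i ∈ Finset.range (n + 1 - k), g k i := by
            refine Finset.sum_congr rfl fun k hk => ?_
            have hk' : k ≤ n := by simpa [Nat.lt_succ_iff] using hk
            have he : n - k + 1 = n + 1 - k := by omega
            rw [he]
        _ = S := by rw [triangle_sum n g, hS]
    have hS2 : (∑ p ∈ Finset.HasAntidiagonal.antidiagonal n, ∑ q ∈ Finset.HasAntidiagonal.antidiagonal p.2, g q.1 q.2) = S := by
      rw [Finset.Nat.sum_antidiagonal_eq_sum_range_succ_mk]
      rw [hS, ← Finset.sum_range_reflect]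
      refine Finset.sum_congr rfl fun k hk => ?_
      have hk' : k ≤ n := by simpa [Nat.lt_succ_iff] using hk
      have he : n - (n.succ - 1 - k) = k := by omega
      simp only [he, hg]
    have hS3 : (∑ p ∈ Finset.HasAntidiagonal.antidiagonal n, ∑ q ∈ Finset.HasAntidiagonal.antidiagonal p.2, g q.2 p.1) = S := by
      have inner : ∀ p : ℕ × ℕ, ∑ q ∈ Finset.HasAntidiagonal.antidiagonal p.2, g q.2 p.1
          = ∑ i ∈ Finset.range (p.2 + 1), g (p.2 - i) p.1 := by
        intro p
        rw [Finset.Nat.sum_antidiagonal_eq_sum_range_succ_mk]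
      calc (∑ p ∈ Finset.HasAntidiagonal.antidiagonal n, ∑ q ∈ Finset.HasAntidiagonal.antidiagonal p.2, g q.2 p.1)
          = ∑ p ∈ Finset.HasAntidiagonal.antidiagonal n, ∑ i ∈ Finset.range (p.2 + 1), g (p.2 - i) p.1 := by
            exact Finset.sum_congr rfl fun p _ => inner p
        _ = ∑ p ∈ Finset.HasAntidiagonal.antidiagonal n, ∑ i ∈ Finset.range (p.2 + 1), g i p.1 := by
            refine Finset.sum_congr rfl fun p _ => ?_
            rw [← Finset.sum_range_reflect (fun i => g i p.1) (p.2 + 1)]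
            refine Finset.sum_congr rfl fun i hi => ?_
            have hi' : i ≤ p.2 := by simpa [Nat.lt_succ_iff] using hi
            have he : p.2 - i = p.2 + 1 - 1 - i := by omega
            rw [he]
        _ = ∑ k ∈ Finset.range (n + 1), ∑ i ∈ Finset.range (n + 1 - k), g i k := by
            rw [Finset.Nat.sum_antidiagonal_eq_sum_range_succ_mk]
            refine Finset.sum_congr rfl fun k hk => ?_
            have hk' : k ≤ n := by simpa [Nat.lt_succ_iff] using hk
            have he : n - k + 1 = n + 1 - k := by omega
            rw [he]
        _ = ∑ j ∈ Finset.range (n + 1), ∑ p ∈ Finset.HasAntidiagonal.antidiagonal j, g p.2 p.1 := by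
            rw [triangle_sum n (fun a b => g b a)]
        _ = S := by
            rw [hS]
            refine Finset.sum_congr rfl fun j _ => ?_
            rw [← Finset.Nat.sum_antidiagonal_swap (f := fun p => g p.1 p.2)]
            rfl
    rw [hS1, hS2, hS3]
    ring
  have h0 : (2 * (n : ℝ) + 3) ≠ 0 := by positivity
  rw [div_mul_eq_mul_div, eq_div_iff h0]
  linarith [key]
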